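/- Let X be countable with enumeration (xₙ)ₙ∈ℕ, ▷ a relation between finite subsets of X and elements of X, and Q a predicate on X. Suppose M ⊆ X satisfies, for all n ∈ ℕ: xₙ ∈ M if and only if Q((M↾n) ⊕ xₙ). If Q(⟨∅⟩) holds, then M is maximal with respect to ▷ and Q, i.e., M is closed, Q(M) holds, and ¬Q(M ⊕ x) for every x ∉ M. -/
import Mathlib


/-- `S ▷* y` : there is a finite subset `A ⊆ S` with `A ▷ y`. -/
def GenFrom {X : Type*} (rel : Finset X → X → Prop) (S : Set X) (y : X) : Prop :=
  ∃ A : Finset X, ↑A ⊆ S ∧ rel A y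

/-- The iterates of the closure operation. -/
def ClosureSeq {X : Type*} (rel : Finset X → X → Prop) (S : Set X) : ℕ → Set X
  | 0 => S
  | i + 1 => ClosureSeq rel S i ∪ {y | GenFrom rel (ClosureSeq rel S i) y}

/-- The closure `⟨S⟩` of `S` with respect to `▷`. -/
def Closure {X : Type*} (rel : Finset X → X → Prop) (S : Set X) : Set X :=
  ⋃ i, ClosureSeq rel S i

/-- `S ⊕ x := ⟨S ∪ {x}⟩`. -/
def Oplus {X : Type*} (rel : Finset X → X → Prop) (S : Set X) (x : X) : Set X :=
  Closure rel (S ∪ {x})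

/-- `S` is closed w.r.t. `▷*`. -/
def IsRelClosed {X : Type*} (rel : Finset X → X → Prop) (S : Set X) : Prop :=
  ∀ y, GenFrom rel S y → y ∈ S

/-- The initial segment `S↾n = S ∩ {x_m | m < n}` of `S` w.r.t. the enumeration `x`. -/
def InitSeg {X : Type*} (x : ℕ → X) (S : Set X) (n : ℕ) : Set X :=
  S ∩ {y | ∃ m < n, x m = y}

section Aux

variable {X : Type*} (rel : Finset X → X → Prop)

lemma closureSeq_mono_idx (S : Set X) : Monotone (ClosureSeq rel S) :=
  monotone_nat_of_le_succ fun _ => Set.subset_union_left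

lemma subset_closure' (S : Set X) : S ⊆ Closure rel S :=
  Set.subset_iUnion (ClosureSeq rel S) 0

lemma finset_subset_iUnion {T : ℕ → Set X} (hT : Monotone T) (A : Finset X)
    (hA : ↑A ⊆ ⋃ i, T i) : ∃ n, (↑A : Set X) ⊆ T n := by
  classical
  induction A using Finset.induction_on with
  | empty => exact ⟨0, by simp⟩
  | @insert a s ha ih =>
    have hs : (↑s : Set X) ⊆ ⋃ i, T i := fun z hz => hA (by simp [hz])
    obtain ⟨n, hn⟩ := ih hs
    obtain ⟨m, hm⟩ := Set.mem_iUnion.1 (hA (Finset.mem_coe.2 (s.mem_insert_self a)))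
    refine ⟨max n m, ?_⟩
    simp only [Finset.coe_insert, Set.insert_subset_iff]
    exact ⟨hT (le_max_right n m) hm, hn.trans (hT (le_max_left n m))⟩

lemma closure_isClosed (S : Set X) : IsRelClosed rel (Closure rel S) := by
  rintro y ⟨A, hA, hrel⟩
  obtain ⟨i, hi⟩ := finset_subset_iUnion (closureSeq_mono_idx rel S) A hA
  exact Set.mem_iUnion.2 ⟨i + 1, Or.inr ⟨A, hi, hrel⟩⟩

lemma closure_min {S T : Set X} (hST : S ⊆ T) (hT : IsRelClosed rel T) :
    Closure rel S ⊆ T := by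
  refine Set.iUnion_subset fun i => ?_
  induction i with
  | zero => exact hST
  | succ i ih =>
    rintro y (h | ⟨A, hA, hrel⟩)
    · exact ih h
    · exact hT y ⟨A, hA.trans ih, hrel⟩

lemma closure_mono' {S T : Set X} (hST : S ⊆ T) : Closure rel S ⊆ Closure rel T :=
  closure_min rel (hST.trans (subset_closure' rel T)) (closure_isClosed rel T)

lemma initSeg_zero (x : ℕ → X) (S : Set X) : InitSeg x S 0 = ∅ := by
  ext y; simp [InitSeg]

lemma initSeg_mono (x : ℕ → X) (S : Set X) : Monotone (InitSeg x S) := by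
  intro n m hnm y ⟨hy, k, hk, hxk⟩
  exact ⟨hy, k, hk.trans_le hnm, hxk⟩

lemma initSeg_subset (x : ℕ → X) (S : Set X) (n : ℕ) : InitSeg x S n ⊆ S :=
  Set.inter_subset_left

lemma initSeg_succ_mem (x : ℕ → X) (S : Set X) (n : ℕ) (h : x n ∈ S) :
    InitSeg x S (n + 1) = InitSeg x S n ∪ {x n} := by
  ext y
  constructor
  · rintro ⟨hy, m, hm, hxm⟩
    rcases Nat.lt_succ_iff_lt_or_eq.1 hm with hm' | rfl
    · exact Or.inl ⟨hy, m, hm', hxm⟩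
    · exact Or.inr hxm.symm
  · rintro (⟨hy, m, hm, hxm⟩ | rfl)
    · exact ⟨hy, m, hm.trans (Nat.lt_succ_self n), hxm⟩
    · exact ⟨h, n, Nat.lt_succ_self n, rfl⟩

lemma initSeg_succ_not_mem (x : ℕ → X) (S : Set X) (n : ℕ) (h : x n ∉ S) :
    InitSeg x S (n + 1) = InitSeg x S n := by
  ext y
  constructor
  · rintro ⟨hy, m, hm, hxm⟩
    rcases Nat.lt_succ_iff_lt_or_eq.1 hm with hm' | rfl
    · exact ⟨hy, m, hm', hxm⟩
    · exact absurd (hxm ▸ hy) h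
  · rintro ⟨hy, m, hm, hxm⟩
    exact ⟨hy, m, hm.trans (Nat.lt_succ_self n), hxm⟩

end Aux

/-- If `M` satisfies `xₙ ∈ M ↔ Q((M↾n) ⊕ xₙ)` for all `n`, and `Q(⟨∅⟩)` holds,
then `M` is maximal w.r.t. `▷` and `Q`. -/
theorem stmt5 {X : Type*} (x : ℕ → X) (hx : Function.Surjective x)
    (rel : Finset X → X → Prop) (Q : X → Prop) (M : Set X)
    (hM : ∀ n : ℕ, x n ∈ M ↔ ∀ y ∈ Oplus rel (InitSeg x M n) (x n), Q y)
    (hQ : ∀ y ∈ Closure rel (∅ : Set X), Q y) :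
    IsRelClosed rel M ∧ (∀ y ∈ M, Q y) ∧
      ∀ z ∉ M, ¬ ∀ y ∈ Oplus rel M z, Q y := by
  -- Q holds on the closure of each initial segment
  have hQinit : ∀ n, ∀ y ∈ Closure rel (InitSeg x M n), Q y := by
    intro n
    induction n with
    | zero => rw [initSeg_zero]; exact hQ
    | succ n ih =>
      by_cases h : x n ∈ M
      · have := (hM n).1 h
        rw [initSeg_succ_mem x M n h]
        exact this
      · rw [initSeg_succ_not_mem x M n h]
        exact ih
  -- Q holds on the closure of M
  have hQM : ∀ y ∈ Closure rel M, Q y := by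
    set T : Set X := ⋃ n, Closure rel (InitSeg x M n) with hT
    have hTmono : Monotone fun n => Closure rel (InitSeg x M n) :=
      fun n m hnm => closure_mono' rel (initSeg_mono x M hnm)
    have hMT : M ⊆ T := by
      intro z hz
      obtain ⟨m, rfl⟩ := hx z
      exact Set.mem_iUnion.2 ⟨m + 1,
        subset_closure' rel _ ⟨hz, m, Nat.lt_succ_self m, rfl⟩⟩
    have hTclosed : IsRelClosed rel T := by
      rintro y ⟨A, hA, hrel⟩
      obtain ⟨n, hn⟩ := finset_subset_iUnion hTmono A hA
      exact Set.mem_iUnion.2 ⟨n, closure_isClosed rel _ y ⟨A, hn, hrel⟩⟩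
    intro y hy
    obtain ⟨n, hn⟩ := Set.mem_iUnion.1 (closure_min rel hMT hTclosed hy)
    exact hQinit n y hn
  refine ⟨?_, fun y hy => hQM y (subset_closure' rel M hy), ?_⟩
  · intro y hy
    obtain ⟨n, rfl⟩ := hx y
    have hyCl : x n ∈ Closure rel M := by
      obtain ⟨A, hA, hrel⟩ := hy
      exact Set.mem_iUnion.2 ⟨1, Or.inr ⟨A, hA, hrel⟩⟩
    refine (hM n).2 fun z hz => hQM z ?_
    have hsub : Oplus rel (InitSeg x M n) (x n) ⊆ Closure rel M := by
      apply closure_min rel _ (closure_isClosed rel M)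
      rintro w (hw | rfl)
      · exact subset_closure' rel M (initSeg_subset x M n hw)
      · exact hyCl
    exact hsub hz
  · intro z hz hcon
    obtain ⟨n, rfl⟩ := hx z
    apply hz
    refine (hM n).2 fun w hw => hcon w ?_
    exact closure_mono' rel (Set.union_subset_union_left _ (initSeg_subset x M n)) hw
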